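/- Let l : ℝ → ℝ be a loss function with lim_{x→-∞} l(x)/x = 0. Then EW^l(X) := E[l(-X)] is strongly sensitive to large losses on H^{Φ_l}: for each X ∈ H^{Φ_l} with ℙ[X < 0] > 0 there exists λ ≥ 1 with E[l(-λX)] > 0. -/

import Mathlib

open Filter MeasureTheory

/-- for a loss function `l` with `lim_{x→-∞} l(x)/x = 0`, the expected
weighted loss `EW^l(X) = E[l(-X)]` is strongly sensitive to large losses on the Orlicz
heart `H^{Φ_l}`: every `X ∈ H^{Φ_l}` with `ℙ[X<0] > 0` satisfies `E[l(-λX)] > 0` for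
some `λ ≥ 1`. -/
theorem stmt13 {Ω : Type*} [MeasurableSpace Ω] (μ : Measure Ω) [IsProbabilityMeasure μ]
    (l : ℝ → ℝ) (hmono : Monotone l) (hconv : ConvexOn ℝ Set.univ l)
    (h0 : l 0 = 0) (hge : ∀ x : ℝ, x ≤ l x)
    (hsub : Tendsto (fun x : ℝ => l x / x) atBot (nhds 0))
    (X : Ω → ℝ) (hmeas : Measurable X)
    (hheart : ∀ a : ℝ, 0 < a → Integrable (fun ω => l (a * |X ω|)) μ)
    (hneg : 0 < μ {ω | X ω < 0}) :
    ∃ lam : ℝ, 1 ≤ lam ∧ 0 < ∫ ω, l (-(lam * X ω)) ∂μ := by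
  -- |X| is integrable
  have hlX : Integrable (fun ω => l (|X ω|)) μ := by simpa using hheart 1 one_pos
  have habs : Integrable (fun ω => |X ω|) μ := by
    refine hlX.mono' hmeas.abs.aestronglyMeasurable ?_
    filter_upwards with ω
    rw [Real.norm_eq_abs, abs_abs]
    exact hge _
  -- the positive part of -X
  have hposInt : Integrable (fun ω => max (-X ω) 0) μ := by
    refine habs.mono' ((hmeas.neg.max measurable_const).aestronglyMeasurable) ?_
    filter_upwards with ω
    rw [Real.norm_eq_abs]
    rcases le_total (X ω) 0 with h | h
    · rw [max_eq_left (by linarith), abs_of_nonneg (by linarith), abs_of_nonpos h]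
    · rw [max_eq_right (by linarith), abs_of_nonneg le_rfl]
      exact abs_nonneg _
  set c₁ : ℝ := ∫ ω, max (-X ω) 0 ∂μ with hc₁def
  have hc₁ : 0 < c₁ := by
    rw [hc₁def]
    refine (integral_pos_iff_support_of_nonneg (fun ω => le_max_right _ _) hposInt).mpr ?_
    refine lt_of_lt_of_le hneg (measure_mono ?_)
    intro ω hω
    simp only [Set.mem_setOf_eq] at hω
    simp only [Function.mem_support, ne_eq, Pi.sup_apply, Pi.zero_apply]
    have h2 : (0:ℝ) < max (-X ω) 0 := lt_sup_of_lt_left (by linarith)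
    exact fun h => absurd h (ne_of_gt h2)
  set m : ℝ := ∫ ω, |X ω| ∂μ with hmdef
  have hm : 0 ≤ m := integral_nonneg fun ω => abs_nonneg _
  have hεpos : 0 < c₁ / (2 * (1 + m)) := by positivity
  -- choose lambda
  obtain ⟨N, hN⟩ := (eventually_atBot.mp
    ((Metric.tendsto_nhds.mp hsub) _ hεpos))
  set lam : ℝ := max 1 (|N| + 1) with hlamdef
  have hlam1 : (1:ℝ) ≤ lam := le_max_left _ _
  have hlampos : (0:ℝ) < lam := by linarith
  have hlamN : -lam ≤ N := by
    have : |N| + 1 ≤ lam := le_max_right _ _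
    have := neg_abs_le N
    linarith
  have hlneg : l (-lam) ≤ 0 := by
    have := hmono (by linarith : -lam ≤ 0)
    rwa [h0] at this
  have hsmall : -l (-lam) < c₁ / (2 * (1 + m)) * lam := by
    have := hN _ hlamN
    rw [Real.dist_eq, sub_zero, abs_div, abs_neg, abs_of_pos hlampos] at this
    rw [div_lt_iff₀ hlampos] at this
    calc -l (-lam) ≤ |l (-lam)| := neg_le_abs _
    _ < _ := this
  -- pointwise key bound
  have key : ∀ x : ℝ, lam * max (-x) 0 + l (-lam) * (1 + |x|) ≤ l (-(lam * x)) := by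
    intro x
    rcases lt_or_ge x 0 with hx | hx
    · rw [max_eq_left (by linarith : (0:ℝ) ≤ -x)]
      have h1 := hge (-(lam * x))
      have h2 : l (-lam) * (1 + |x|) ≤ 0 :=
        mul_nonpos_of_nonpos_of_nonneg hlneg (by positivity)
      nlinarith
    · rw [max_eq_right (by linarith : -x ≤ (0:ℝ)), abs_of_nonneg hx, mul_zero, zero_add]
      rcases le_total x 1 with hx1 | hx1
      · have h1 : l (-lam) ≤ l (-(lam * x)) := hmono (by nlinarith)
        nlinarith
      · -- convexity: -lam = (1/x)•(-(lam*x)) + (1-1/x)•0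
        have hx0 : 0 < x := by linarith
        have hcvx := hconv.2 (Set.mem_univ (-(lam * x))) (Set.mem_univ (0:ℝ))
          (by positivity : (0:ℝ) ≤ 1/x) (by
            rw [sub_nonneg, div_le_one hx0]; linarith : (0:ℝ) ≤ 1 - 1/x)
          (by ring)
        simp only [smul_eq_mul, mul_zero, h0, add_zero] at hcvx
        have heq : 1/x * -(lam * x) = -lam := by field_simp
        rw [heq] at hcvx
        -- hcvx : l (-lam) ≤ 1/x * l (-(lam*x)) + (1-1/x)*0... check
        have h3 : x * l (-lam) ≤ l (-(lam * x)) := by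
          have h := mul_le_mul_of_nonneg_left hcvx (le_of_lt hx0)
          rw [← mul_assoc, mul_one_div, div_self (ne_of_gt hx0), one_mul] at h
          exact h
        nlinarith
  -- integrability of the target
  have hmeasl : Measurable fun ω => l (-(lam * X ω)) :=
    hmono.measurable.comp ((measurable_const.mul hmeas).neg)
  have hbound : Integrable (fun ω =>
      l (lam * |X ω|) + (lam * |X ω| + |l (-lam)| * (1 + |X ω|))) μ := by
    refine (hheart lam hlampos).add (Integrable.add (habs.const_mul lam) ?_)
    exact ((integrable_const (1:ℝ)).add habs).const_mul _
  have hIntl : Integrable (fun ω => l (-(lam * X ω))) μ := by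
    refine hbound.mono' hmeasl.aestronglyMeasurable ?_
    filter_upwards with ω
    rw [Real.norm_eq_abs, abs_le]
    constructor
    · have h1 := key (X ω)
      have h2 : 0 ≤ lam * max (-X ω) 0 := by positivity
      have h3 : l (-lam) * (1 + |X ω|) ≥ -(|l (-lam)| * (1 + |X ω|)) := by
        have := neg_abs_le (l (-lam))
        nlinarith [abs_nonneg (X ω)]
      have h4 : (0:ℝ) ≤ lam * |X ω| := by positivity
      have h5 := hge (lam * |X ω|)
      nlinarith
    · have h1 : l (-(lam * X ω)) ≤ l (lam * |X ω|) := by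
        apply hmono
        have := neg_abs_le (X ω)
        nlinarith
      have h4 : (0:ℝ) ≤ lam * |X ω| := by positivity
      have h2 : 0 ≤ |l (-lam)| * (1 + |X ω|) := by positivity
      nlinarith
  -- integrate the key bound
  have hglhs : Integrable (fun ω => lam * max (-X ω) 0 + l (-lam) * (1 + |X ω|)) μ := by
    exact (hposInt.const_mul lam).add (((integrable_const (1:ℝ)).add habs).const_mul _)
  have hle : ∫ ω, (lam * max (-X ω) 0 + l (-lam) * (1 + |X ω|)) ∂μ
      ≤ ∫ ω, l (-(lam * X ω)) ∂μ :=
    integral_mono hglhs hIntl fun ω => key (X ω)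
  have hB : Integrable (fun ω => l (-lam) * (1 + |X ω|)) μ := by
    have := ((integrable_const (1:ℝ)).add habs).const_mul (l (-lam))
    simpa using this
  have hcalc : ∫ ω, (lam * max (-X ω) 0 + l (-lam) * (1 + |X ω|)) ∂μ
      = lam * c₁ + l (-lam) * (1 + m) := by
    rw [integral_add (hposInt.const_mul lam) hB,
      integral_const_mul, integral_const_mul,
      integral_add (integrable_const (1:ℝ)) habs, integral_const]
    simp [hc₁def, hmdef]
  rw [hcalc] at hle
  refine ⟨lam, hlam1, lt_of_lt_of_le ?_ hle⟩
  have h1m : 0 < 1 + m := by linarith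
  have : -l (-lam) * (1 + m) < c₁ / (2 * (1 + m)) * lam * (1 + m) :=
    mul_lt_mul_of_pos_right hsmall h1m
  have h2 : c₁ / (2 * (1 + m)) * lam * (1 + m) = c₁ * lam / 2 := by
    field_simp
  rw [h2] at this
  nlinarith
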